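/- For every d ≥ 1 and every real p, the expected Euler characteristic curve per cell of the random permutahedral complex satisfies the symmetry g_d(p) = (-1)^(d-1) * g_d(1-p), where g_d(p) = Σ_{k=0}^d (-1)^k c_k(d) (1 - (1-p)^(d+1-k)) and c_k(d) = (number of surjections from Fin(d+1) onto Fin(d+1-k)) / (d+1-k). -/

import Mathlib

section PermutahedralAux

open Finset



noncomputable def Sc (n j : ℕ) : ℕ := Nat.card {f : Fin n → Fin j // Function.Surjective f}

noncomputable def Tc (n j : ℕ) : ℝ :=
  ∑ i ∈ range (j + 1), (-1 : ℝ) ^ (j + i) * (j.choose i) * (i : ℝ) ^ n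

lemma mem_inf_finset {α ι : Type*} [DecidableEq α] [Fintype α] (s : Finset ι)
    (f : ι → Finset α) (a : α) : a ∈ s.inf f ↔ ∀ i ∈ s, a ∈ f i := by
  induction s using Finset.cons_induction <;> simp [*]

lemma Sc_zero_of_lt {n j : ℕ} (h : n < j) : Sc n j = 0 := by
  have : IsEmpty {f : Fin n → Fin j // Function.Surjective f} := by
    constructor
    rintro ⟨f, hf⟩
    have := Fintype.card_le_of_surjective f hf
    simp at this
    omega
  simp [Sc, Nat.card_of_isEmpty]

lemma Sc_zero {n : ℕ} (h : n ≠ 0) : Sc n 0 = 0 := by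
  have : IsEmpty {f : Fin n → Fin 0 // Function.Surjective f} := by
    constructor
    rintro ⟨f, -⟩
    exact (f ⟨0, by omega⟩).elim0
  simp [Sc, Nat.card_of_isEmpty]

lemma Sc_closed (n j : ℕ) : (Sc n j : ℝ) = Tc n j := by
  classical
  -- surjections as an intersection of complements
  have hcard : Sc n j = #(Finset.univ.inf fun i : Fin j =>
      ({f : Fin n → Fin j | ∀ a, f a ≠ i} : Finset _)ᶜ) := by
    rw [Sc, Nat.card_eq_fintype_card, Fintype.card_subtype]
    congr 1
    ext f
    rw [Finset.mem_filter]
    simp [mem_inf_finset, Function.Surjective]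
  have hie := Finset.inclusion_exclusion_card_inf_compl (Finset.univ : Finset (Fin j))
      (fun i : Fin j => ({f : Fin n → Fin j | ∀ a, f a ≠ i} : Finset _))
  -- each intersection is a piFinset
  have hinf : ∀ t : Finset (Fin j),
      t.inf (fun i : Fin j => ({f : Fin n → Fin j | ∀ a, f a ≠ i} : Finset _))
        = Fintype.piFinset (fun _ : Fin n => tᶜ) := by
    intro t
    ext f
    simp only [mem_inf_finset, Fintype.mem_piFinset, Finset.mem_compl, Finset.mem_filter,
      Finset.mem_univ, true_and]
    constructor
    · intro h a hat
      exact h _ hat a rfl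
    · intro h i hit a hfa
      exact h a (hfa ▸ hit)
  have hZ : (Sc n j : ℤ) = ∑ t ∈ (Finset.univ : Finset (Fin j)).powerset,
      (-1 : ℤ) ^ #t * ((j - #t : ℕ) ^ n : ℕ) := by
    rw [hcard, hie]
    refine Finset.sum_congr rfl fun t _ => ?_
    rw [hinf t]
    congr 1
    push_cast
    rw [Fintype.card_piFinset]
    simp [Finset.card_compl]
  rw [Finset.sum_powerset_apply_card (fun m => (-1 : ℤ) ^ m * ((j - m : ℕ) ^ n : ℕ))] at hZ
  have hZ' : (Sc n j : ℝ) = ∑ m ∈ range (j + 1),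
      (j.choose m : ℝ) * ((-1) ^ m * ((j - m : ℕ) : ℝ) ^ n) := by
    have := congrArg (fun z : ℤ => (z : ℝ)) hZ
    push_cast at this ⊢
    simpa [Finset.card_univ] using this
  clear hZ hie hcard hinf
  rw [hZ', Tc,
    ← Finset.sum_range_reflect (fun i => (-1 : ℝ) ^ (j + i) * (j.choose i) * (i : ℝ) ^ n) (j + 1)]
  refine Finset.sum_congr rfl fun m hm => ?_
  rw [mem_range] at hm
  have hmj : m ≤ j := by omega
  have h0 : j + 1 - 1 - m = j - m := by omega
  rw [h0, Nat.choose_symm hmj]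
  have h4 : (-1 : ℝ) ^ (j + (j - m)) = (-1) ^ m := by
    have : j + (j - m) = m + 2 * (j - m) := by omega
    rw [this, pow_add, pow_mul]
    simp
  rw [h4]
  ring



lemma alt_choose_real (N : ℕ) :
    ∑ u ∈ range (N + 1), (-1 : ℝ) ^ u * (N.choose u) = if N = 0 then 1 else 0 := by
  have := Int.alternating_sum_range_choose (n := N)
  have h := congrArg (fun z : ℤ => (z : ℝ)) this
  push_cast at h
  rw [h]

lemma ortho (t i M : ℕ) (ht : t ≤ M) :
    ∑ j ∈ range (M + 1), (-1 : ℝ) ^ (i + j) * (t.choose j) * (j.choose i)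
      = if i = t then 1 else 0 := by
  -- shrink to range (t+1)
  rw [← Finset.sum_subset (Finset.range_subset_range.2 (by omega : t + 1 ≤ M + 1))
    (fun j _ hj => by
      rw [mem_range, not_lt] at hj
      have : t.choose j = 0 := Nat.choose_eq_zero_of_lt (by omega)
      simp [this])]
  by_cases hit : i ≤ t
  · -- terms j < i vanish
    rw [Finset.range_eq_Ico, ← Finset.sum_Ico_consecutive _ (by omega : 0 ≤ i) (by omega : i ≤ t + 1)]
    have h1 : ∑ j ∈ Finset.Ico 0 i, (-1 : ℝ) ^ (i + j) * (t.choose j) * (j.choose i) = 0 := by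
      apply Finset.sum_eq_zero
      intro j hj
      rw [Finset.mem_Ico] at hj
      have : j.choose i = 0 := Nat.choose_eq_zero_of_lt (by omega)
      simp [this]
    rw [h1, zero_add, Finset.sum_Ico_eq_sum_range]
    have h2 : ∀ u ∈ range (t + 1 - i), (-1 : ℝ) ^ (i + (i + u)) * (t.choose (i + u)) * ((i + u).choose i)
        = (t.choose i : ℝ) * ((-1) ^ u * ((t - i).choose u)) := by
      intro u hu
      rw [mem_range] at hu
      have hc : t.choose (i + u) * (i + u).choose i = t.choose i * (t - i).choose u := by
        have := Nat.choose_mul (n := t) (k := i + u) (s := i) (by omega)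
        simpa using this
      have hsign : (-1 : ℝ) ^ (i + (i + u)) = (-1) ^ u := by
        have : i + (i + u) = u + 2 * i := by omega
        rw [this, pow_add, pow_mul]
        simp
      rw [hsign]
      have hcr : (t.choose (i + u) : ℝ) * ((i + u).choose i)
          = (t.choose i : ℝ) * ((t - i).choose u) := by
        exact_mod_cast congrArg (Nat.cast : ℕ → ℝ) hc
      linear_combination (-1 : ℝ) ^ u * hcr
    rw [Finset.sum_congr rfl h2, ← Finset.mul_sum]
    have h3 : t + 1 - i = (t - i) + 1 := by omega
    rw [h3, alt_choose_real]
    by_cases hti : i = t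
    · subst hti
      simp
    · have : ¬ (t - i = 0) := by omega
      simp [this, hti]
  · -- i > t : all terms vanish
    rw [if_neg (by omega)]
    apply Finset.sum_eq_zero
    intro j hj
    rw [mem_range] at hj
    have : j.choose i = 0 := Nat.choose_eq_zero_of_lt (by omega)
    simp [this]

lemma nat_newton (m t : ℕ) :
    ∑ j ∈ range (m + 1), (Sc m j : ℝ) * (t.choose j) = (t : ℝ) ^ m := by
  have hext : ∑ j ∈ range (m + 1), (Sc m j : ℝ) * (t.choose j)
      = ∑ j ∈ range (m + t + 1), (Sc m j : ℝ) * (t.choose j) := by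
    apply Finset.sum_subset (Finset.range_subset_range.2 (by omega))
    intro j _ hj
    rw [mem_range, not_lt] at hj
    have : Sc m j = 0 := Sc_zero_of_lt (by omega)
    simp [this]
  rw [hext]
  have hT : ∀ j, (Sc m j : ℝ) * (t.choose j) =
      ∑ i ∈ range (m + t + 1), (-1 : ℝ) ^ (j + i) * (j.choose i) * (i : ℝ) ^ m * (t.choose j) := by
    intro j
    rw [Sc_closed, Tc]
    by_cases hj : j + 1 ≤ m + t + 1
    · rw [Finset.sum_mul]
      apply Finset.sum_subset (Finset.range_subset_range.2 hj)
      intro i _ hi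
      rw [mem_range, not_lt] at hi
      have : j.choose i = 0 := Nat.choose_eq_zero_of_lt (by omega)
      simp [this]
    · -- j ≥ m + t + 1 > m, so Sc m j = 0... but we've rewritten; handle via t.choose j = 0
      have : t.choose j = 0 := Nat.choose_eq_zero_of_lt (by omega)
      simp [this]
  rw [Finset.sum_congr rfl (fun j _ => hT j), Finset.sum_comm]
  have hinner : ∀ i ∈ range (m + t + 1),
      ∑ j ∈ range (m + t + 1), (-1 : ℝ) ^ (j + i) * (j.choose i) * (i : ℝ) ^ m * (t.choose j)
        = (if i = t then 1 else 0) * (i : ℝ) ^ m := by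
    intro i _
    have := ortho t i (m + t) (by omega)
    rw [← this, Finset.sum_mul]
    apply Finset.sum_congr rfl
    intro j _
    have : (-1 : ℝ) ^ (j + i) = (-1) ^ (i + j) := by rw [Nat.add_comm]
    rw [this]
    ring
  rw [Finset.sum_congr rfl hinner]
  have hsplit : ∀ i ∈ range (m + t + 1),
      (if i = t then (1:ℝ) else 0) * (i : ℝ) ^ m = if i = t then (i:ℝ)^m else 0 := by
    intro i _
    split <;> simp
  rw [Finset.sum_congr rfl hsplit, Finset.sum_ite_eq' (range (m + t + 1)) t (fun i => ((i : ℝ) ^ m)),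
    if_pos (Finset.mem_range.2 (by omega))]



noncomputable def cb (j : ℕ) (x : ℝ) : ℝ := (∏ r ∈ range j, (x - r)) / (j.factorial)

lemma prod_sub_eq_descFactorial (t j : ℕ) :
    ∏ r ∈ range j, ((t : ℝ) - r) = (t.descFactorial j : ℝ) := by
  induction j with
  | zero => simp
  | succ j ih =>
    rw [Finset.prod_range_succ, ih, Nat.descFactorial_succ]
    by_cases h : j < t
    · push_cast [Nat.cast_sub (by omega : j ≤ t)]
      ring
    · have h2 : t - j = 0 := by omega
      by_cases ht : t = j
      · subst ht
        rw [h2]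
        simp
      · have h1 : t.descFactorial j = 0 := Nat.descFactorial_eq_zero_iff_lt.2 (by omega)
        rw [h1, h2]
        simp

lemma cb_nat (j t : ℕ) : cb j t = (t.choose j : ℝ) := by
  rw [cb, prod_sub_eq_descFactorial, Nat.descFactorial_eq_factorial_mul_choose]
  push_cast
  rw [mul_comm, mul_div_assoc, div_self (by exact_mod_cast j.factorial_ne_zero), mul_one]

lemma cb_zero (x : ℝ) : cb 0 x = 1 := by simp [cb]

lemma cb_pascal (j : ℕ) (x : ℝ) : cb (j + 1) (x + 1) = cb (j + 1) x + cb j x := by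
  have hnum : ∏ r ∈ range (j + 1), (x + 1 - r) = (x + 1) * ∏ r ∈ range j, (x - r) := by
    rw [Finset.prod_range_succ']
    simp only [Nat.cast_add, Nat.cast_one, Nat.cast_zero, sub_zero]
    rw [mul_comm]
    congr 1
    apply Finset.prod_congr rfl
    intro r _
    push_cast
    ring
  rw [cb, cb, cb, hnum, Finset.prod_range_succ]
  have hf : ((j + 1).factorial : ℝ) = (j + 1) * (j.factorial) := by
    rw [Nat.factorial_succ]; push_cast; ring
  rw [hf]
  have h1 : (j.factorial : ℝ) ≠ 0 := by exact_mod_cast j.factorial_ne_zero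
  have h2 : ((j : ℝ) + 1) ≠ 0 := by positivity
  field_simp
  ring

lemma cb_reflect (j : ℕ) (x : ℝ) : cb j (-1 - x) = (-1) ^ j * cb j (x + j) := by
  rw [cb, cb]
  have h1 : ∏ r ∈ range j, (-1 - x - r) = (-1) ^ j * ∏ r ∈ range j, (x + 1 + r) := by
    calc ∏ r ∈ range j, (-1 - x - (r : ℝ)) = ∏ r ∈ range j, (-1) * (x + 1 + r) :=
          Finset.prod_congr rfl (fun r _ => by ring)
      _ = (-1) ^ j * ∏ r ∈ range j, (x + 1 + (r : ℝ)) := by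
          rw [Finset.prod_mul_distrib, Finset.prod_const, Finset.card_range]
  have h2 : ∏ r ∈ range j, (x + (j : ℝ) - r) = ∏ r ∈ range j, (x + 1 + r) := by
    rw [← Finset.prod_range_reflect (fun r => x + 1 + r) j]
    apply Finset.prod_congr rfl
    intro r hr
    rw [mem_range] at hr
    have : ((j - 1 - r : ℕ) : ℝ) = (j : ℝ) - 1 - r := by
      have e : j - 1 - r = j - (1 + r) := by omega
      rw [e, Nat.cast_sub (by omega)]
      push_cast
      ring
    rw [this]
    ring
  rw [h1, h2, mul_div_assoc]

lemma newton_real (m : ℕ) (x : ℝ) :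
    ∑ j ∈ range (m + 1), (Sc m j : ℝ) * cb j x = x ^ m := by
  classical
  set P : Polynomial ℝ := ∑ j ∈ range (m + 1),
    Polynomial.C ((Sc m j : ℝ) / j.factorial) * ∏ r ∈ range j, (Polynomial.X - Polynomial.C (r : ℝ))
    with hP
  have hEval : ∀ y : ℝ, P.eval y = ∑ j ∈ range (m + 1), (Sc m j : ℝ) * cb j y := by
    intro y
    rw [hP, Polynomial.eval_finset_sum]
    apply Finset.sum_congr rfl
    intro j _
    rw [Polynomial.eval_mul, Polynomial.eval_C, Polynomial.eval_prod]
    simp only [Polynomial.eval_sub, Polynomial.eval_X, Polynomial.eval_C]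
    rw [cb]
    ring
  have hPX : P = Polynomial.X ^ m := by
    apply Polynomial.eq_of_infinite_eval_eq
    apply Set.Infinite.mono (s := Set.range ((↑) : ℕ → ℝ))
    · rintro y ⟨t, rfl⟩
      simp only [Set.mem_setOf_eq, Polynomial.eval_pow, Polynomial.eval_X]
      rw [hEval]
      rw [Finset.sum_congr rfl (fun j _ => by rw [cb_nat])]
      exact nat_newton m t
    · exact Set.infinite_range_of_injective Nat.cast_injective
  have := congrArg (Polynomial.eval x) hPX
  rw [hEval] at this
  simpa using this



noncomputable def eC (m j : ℕ) : ℝ :=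
  ∑ i ∈ range (j + 1), (-1 : ℝ) ^ (j + i) * (j.choose i) * ((i : ℝ) + 1) ^ m

-- e m j = Sc m j + Sc m (j+1), for m ≠ 0
lemma e_eq {m : ℕ} (hm : m ≠ 0) (j : ℕ) : eC m j = (Sc m j : ℝ) + (Sc m (j + 1) : ℝ) := by
  rw [Sc_closed, Sc_closed, Tc, Tc]
  -- extend Tc m j to range (j+2)
  have hTj : ∑ i ∈ range (j + 1), (-1 : ℝ) ^ (j + i) * (j.choose i) * (i : ℝ) ^ m
      = ∑ i ∈ range (j + 2), (-1 : ℝ) ^ (j + i) * (j.choose i) * (i : ℝ) ^ m := by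
    apply Finset.sum_subset (Finset.range_subset_range.2 (by omega))
    intro i _ hi
    rw [mem_range, not_lt] at hi
    have : j.choose i = 0 := Nat.choose_eq_zero_of_lt (by omega)
    simp [this]
  rw [hTj]
  rw [Finset.sum_range_succ' (fun i => (-1 : ℝ) ^ (j + i) * (j.choose i) * (i : ℝ) ^ m) (j + 1),
    Finset.sum_range_succ' (fun i => (-1 : ℝ) ^ (j + 1 + i) * ((j+1).choose i) * (i : ℝ) ^ m) (j + 1)]
  simp only [Nat.cast_zero, zero_pow hm, mul_zero, add_zero]
  rw [eC, ← Finset.sum_add_distrib]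
  apply Finset.sum_congr rfl
  intro i _
  have hs1 : (-1 : ℝ) ^ (j + (i + 1)) = -(-1 : ℝ) ^ (j + i) := by
    rw [show j + (i + 1) = (j + i) + 1 by omega, pow_succ]
    ring
  have hs2 : (-1 : ℝ) ^ (j + 1 + (i + 1)) = (-1 : ℝ) ^ (j + i) := by
    rw [show j + 1 + (i + 1) = (j + i) + 2 by omega, pow_add]
    simp
  have hch : ((j + 1).choose (i + 1) : ℝ) = (j.choose i : ℝ) + (j.choose (i + 1) : ℝ) := by
    rw [Nat.choose_succ_succ]
    push_cast
    ring
  rw [hs1, hs2, hch]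
  push_cast
  ring

lemma Sc_succ (m j : ℕ) : (Sc (m + 1) (j + 1) : ℝ) = ((j : ℝ) + 1) * eC m j := by
  rw [Sc_closed, Tc, eC]
  rw [Finset.sum_range_succ' (fun i => (-1 : ℝ) ^ (j + 1 + i) * ((j+1).choose i) * (i : ℝ) ^ (m+1)) (j + 1)]
  simp only [Nat.cast_zero, zero_pow (Nat.succ_ne_zero m), mul_zero, add_zero]
  rw [Finset.mul_sum]
  apply Finset.sum_congr rfl
  intro i _
  have hs : (-1 : ℝ) ^ (j + 1 + (i + 1)) = (-1 : ℝ) ^ (j + i) := by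
    rw [show j + 1 + (i + 1) = (j + i) + 2 by omega, pow_add]
    simp
  have hch : ((j : ℝ) + 1) * (j.choose i : ℝ) = ((j + 1).choose (i + 1) : ℝ) * ((i : ℝ) + 1) := by
    have := Nat.add_one_mul_choose_eq j i
    have h2 := congrArg (Nat.cast : ℕ → ℝ) this
    push_cast at h2
    convert h2 using 2 <;> push_cast <;> ring
  rw [hs]
  push_cast
  linear_combination (-((-1 : ℝ) ^ (j + i) * ((i : ℝ) + 1) ^ m)) * hch




lemma eNewton_real {m : ℕ} (hm : m ≠ 0) (x : ℝ) :
    ∑ j ∈ range (m + 1), eC m j * cb j x = (x + 1) ^ m := by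
  rw [← newton_real m (x + 1)]
  rw [Finset.sum_range_succ' (fun j => (Sc m j : ℝ) * cb j (x + 1)) m]
  rw [Sc_zero hm]
  simp only [Nat.cast_zero, zero_mul, add_zero]
  have hmain : ∀ j ∈ range m, (Sc m (j + 1) : ℝ) * cb (j + 1) (x + 1)
      = (Sc m (j + 1) : ℝ) * cb (j + 1) x + (Sc m (j + 1) : ℝ) * cb j x := by
    intro j _
    rw [cb_pascal]
    ring
  rw [Finset.sum_congr rfl hmain, Finset.sum_add_distrib]
  have hA : ∑ j ∈ range (m + 1), eC m j * cb j x
      = ∑ j ∈ range (m + 1), (Sc m j : ℝ) * cb j x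
        + ∑ j ∈ range (m + 1), (Sc m (j + 1) : ℝ) * cb j x := by
    rw [← Finset.sum_add_distrib]
    apply Finset.sum_congr rfl
    intro j _
    rw [e_eq hm]
    ring
  rw [hA]
  congr 1
  · -- ∑_{j ∈ range (m+1)} Sc m j cb j x = ∑_{j ∈ range m} Sc m (j+1) cb (j+1) x
    rw [Finset.sum_range_succ' (fun j => (Sc m j : ℝ) * cb j x) m, Sc_zero hm]
    simp
  · -- ∑_{j ∈ range (m+1)} Sc m (j+1) cb j x = ∑_{j ∈ range m} Sc m (j+1) cb j x
    rw [Finset.sum_range_succ, Sc_zero_of_lt (by omega : m < m + 1)]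
    simp

lemma newton_unique {M : ℕ} {a : ℕ → ℝ}
    (h : ∀ t : ℕ, ∑ i ∈ range (M + 1), a i * (t.choose i) = 0) :
    ∀ i, i ≤ M → a i = 0 := by
  intro i
  induction i using Nat.strong_induction_on with
  | _ i ih =>
    intro hiM
    have hi := h i
    have hshrink : ∑ i' ∈ range (M + 1), a i' * (i.choose i')
        = ∑ i' ∈ range (i + 1), a i' * (i.choose i') := by
      symm
      apply Finset.sum_subset (Finset.range_subset_range.2 (by omega))
      intro i' _ hi'
      rw [mem_range, not_lt] at hi'
      have : i.choose i' = 0 := Nat.choose_eq_zero_of_lt (by omega)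
      simp [this]
    rw [hshrink, Finset.sum_range_succ] at hi
    have hz : ∑ i' ∈ range i, a i' * (i.choose i') = 0 := by
      apply Finset.sum_eq_zero
      intro i' hi'
      rw [mem_range] at hi'
      rw [ih i' hi' (by omega)]
      ring
    rw [hz, zero_add, Nat.choose_self] at hi
    simpa using hi

lemma refl_coeff {m : ℕ} (hm : m ≠ 0) :
    ∀ i, i ≤ m → ∑ j ∈ range (m + 1), (-1 : ℝ) ^ j * (j.choose i) * eC m j
      = (-1 : ℝ) ^ m * (Sc m i : ℝ) := by
  have key : ∀ t : ℕ, ∑ i ∈ range (m + 1),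
      (∑ j ∈ range (m + 1), (-1 : ℝ) ^ j * (j.choose i) * eC m j
        - (-1 : ℝ) ^ m * (Sc m i : ℝ)) * (t.choose i) = 0 := by
    intro t
    have hsplit : ∀ i ∈ range (m + 1),
        (∑ j ∈ range (m + 1), (-1 : ℝ) ^ j * (j.choose i) * eC m j
          - (-1 : ℝ) ^ m * (Sc m i : ℝ)) * (t.choose i)
        = (∑ j ∈ range (m + 1), (-1 : ℝ) ^ j * (j.choose i) * eC m j * (t.choose i))
          - (-1 : ℝ) ^ m * ((Sc m i : ℝ) * (t.choose i)) := by
      intro i _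
      rw [sub_mul, Finset.sum_mul, mul_assoc]
    rw [Finset.sum_congr rfl hsplit, Finset.sum_sub_distrib, ← Finset.mul_sum, nat_newton]
    rw [Finset.sum_comm]
    -- inner: ∑_i (-1)^j C(j,i) eC m j C(t,i) = (-1)^j eC m j * C(t+j, j)
    have hvan : ∀ j ∈ range (m + 1),
        ∑ i ∈ range (m + 1), (-1 : ℝ) ^ j * (j.choose i) * eC m j * (t.choose i)
          = eC m j * cb j (-1 - t) := by
      intro j hj
      rw [mem_range] at hj
      have hVdm : ∑ i ∈ range (m + 1), ((j.choose i) : ℝ) * (t.choose i) = ((t + j).choose j : ℝ) := by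
        have hn := Nat.add_choose_eq t j j
        rw [Finset.Nat.sum_antidiagonal_eq_sum_range_succ_mk] at hn
        have hcast := congrArg (Nat.cast : ℕ → ℝ) hn
        push_cast at hcast
        rw [hcast]
        have hshr : ∑ i ∈ range (m + 1), ((j.choose i) : ℝ) * (t.choose i)
            = ∑ i ∈ range (j + 1), ((j.choose i) : ℝ) * (t.choose i) := by
          symm
          apply Finset.sum_subset (Finset.range_subset_range.2 (by omega))
          intro i _ hi
          rw [mem_range, not_lt] at hi
          have : j.choose i = 0 := Nat.choose_eq_zero_of_lt (by omega)
          simp [this]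
        rw [hshr]
        apply Finset.sum_congr rfl
        intro i hi
        rw [mem_range] at hi
        have : j.choose (j - i) = j.choose i := Nat.choose_symm (by omega)
        rw [← this]
        ring
      have hrefl : cb j (-1 - (t : ℝ)) = (-1 : ℝ) ^ j * ((t + j).choose j : ℝ) := by
        rw [cb_reflect]
        congr 1
        have : (t : ℝ) + (j : ℕ) = ((t + j : ℕ) : ℝ) := by push_cast; ring
        rw [this, cb_nat]
      rw [hrefl, ← hVdm, Finset.mul_sum, Finset.mul_sum]
      apply Finset.sum_congr rfl
      intro i _
      ring
    rw [Finset.sum_congr rfl hvan, eNewton_real hm]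
    have : (-1 - (t : ℝ) + 1) ^ m = (-1 : ℝ) ^ m * (t : ℝ) ^ m := by
      rw [← neg_pow]
      ring_nf
    rw [this]
    ring
  intro i hiM
  have := newton_unique key i hiM
  linarith [this]


noncomputable def EP (m : ℕ) (y : ℝ) : ℝ := ∑ j ∈ range (m + 1), eC m j * y ^ j
noncomputable def AP (m : ℕ) (y : ℝ) : ℝ := ∑ j ∈ range (m + 1), (Sc m j : ℝ) * y ^ j


lemma E_refl {m : ℕ} (hm : m ≠ 0) (y : ℝ) : EP m (-1 - y) = (-1 : ℝ) ^ m * AP m y := by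
  rw [EP, AP]
  have hexp : ∀ j ∈ range (m + 1), eC m j * (-1 - y) ^ j
      = ∑ i ∈ range (m + 1), (-1 : ℝ) ^ j * (j.choose i) * eC m j * y ^ i := by
    intro j hj
    rw [mem_range] at hj
    have h1 : (-1 - y) ^ j = (-1 : ℝ) ^ j * (y + 1) ^ j := by
      rw [← neg_pow]
      ring_nf
    have h2 : (y + 1) ^ j = ∑ i ∈ range (j + 1), y ^ i * (j.choose i) := by
      have := add_pow y 1 j
      simpa using this
    have h3 : eC m j * (-1 - y) ^ j
        = ∑ i ∈ range (j + 1), (-1 : ℝ) ^ j * (j.choose i) * eC m j * y ^ i := by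
      rw [h1, h2, Finset.mul_sum, Finset.mul_sum]
      apply Finset.sum_congr rfl
      intro i _
      ring
    rw [h3]
    apply Finset.sum_subset (Finset.range_subset_range.2 (by omega))
    intro i _ hi
    rw [mem_range, not_lt] at hi
    have : j.choose i = 0 := Nat.choose_eq_zero_of_lt (by omega)
    simp [this]
  rw [Finset.sum_congr rfl hexp, Finset.sum_comm, Finset.mul_sum]
  apply Finset.sum_congr rfl
  intro i hi
  rw [mem_range] at hi
  rw [← Finset.sum_mul, refl_coeff hm i (by omega)]
  ring

lemma E_shift {m : ℕ} (hm : m ≠ 0) (y : ℝ) : y * EP m y = (1 + y) * AP m y := by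
  rw [EP, AP, Finset.mul_sum, Finset.mul_sum]
  have h1 : ∀ j ∈ range (m + 1), y * (eC m j * y ^ j)
      = (Sc m j : ℝ) * y ^ (j + 1) + (Sc m (j + 1) : ℝ) * y ^ (j + 1) := by
    intro j _
    rw [e_eq hm, pow_succ]
    ring
  rw [Finset.sum_congr rfl h1, Finset.sum_add_distrib]
  have h2 : ∑ j ∈ range (m + 1), (Sc m (j + 1) : ℝ) * y ^ (j + 1)
      = ∑ j ∈ range (m + 1), (Sc m j : ℝ) * y ^ j := by
    rw [Finset.sum_range_succ' (fun j => (Sc m j : ℝ) * y ^ j) m, Sc_zero hm]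
    rw [Finset.sum_range_succ, Sc_zero_of_lt (by omega : m < m + 1)]
    simp
  rw [h2]
  have h3 : ∀ j ∈ range (m + 1), (1 + y) * ((Sc m j : ℝ) * y ^ j)
      = (Sc m j : ℝ) * y ^ j + (Sc m j : ℝ) * y ^ (j + 1) := by
    intro j _
    rw [pow_succ]
    ring
  rw [Finset.sum_congr rfl h3, Finset.sum_add_distrib]
  ring

lemma hK {d : ℕ} (hd0 : d ≠ 0) : ∑ j ∈ range (d + 1), (-1 : ℝ) ^ j * eC d j = 0 := by
  have h1 : EP d (-1 - 0) = (-1 : ℝ) ^ d * AP d 0 := E_refl hd0 0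
  have h2 : AP d 0 = 0 := by
    rw [AP, Finset.sum_eq_single 0]
    · rw [Sc_zero hd0]; simp
    · intro j _ hj
      rw [zero_pow hj]; ring
    · simp
  rw [h2, mul_zero] at h1
  rw [← h1, EP]
  apply Finset.sum_congr rfl
  intro j _
  norm_num [mul_comm]

lemma W_eq {d : ℕ} (hd0 : d ≠ 0) (y : ℝ) :
    ∑ j ∈ range (d + 1), (-1 : ℝ) ^ j * eC d j * (1 - y ^ (j + 1))
      = -(y * EP d (-y)) := by
  have hsplit : ∀ j ∈ range (d + 1), (-1 : ℝ) ^ j * eC d j * (1 - y ^ (j + 1))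
      = (-1 : ℝ) ^ j * eC d j - y * (eC d j * (-y) ^ j) := by
    intro j _
    rw [neg_pow]
    ring
  rw [Finset.sum_congr rfl hsplit, Finset.sum_sub_distrib, hK hd0, ← Finset.mul_sum, EP]
  ring

theorem permutahedral_ec_curve_symmetry' (d : ℕ) (hd : 1 ≤ d) (p : ℝ) :
    (∑ k ∈ Finset.range (d + 1), (-1 : ℝ) ^ k *
      ((Sc (d+1) (d+1-k) : ℝ) / ((d + 1 - k : ℕ) : ℝ)) * (1 - (1 - p) ^ (d + 1 - k)))
    = (-1 : ℝ) ^ (d - 1) * (∑ k ∈ Finset.range (d + 1), (-1 : ℝ) ^ k *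
      ((Sc (d+1) (d+1-k) : ℝ) / ((d + 1 - k : ℕ) : ℝ)) * (1 - (1 - (1-p)) ^ (d + 1 - k))) := by
  have hd0 : d ≠ 0 := by omega
  have hcurve : ∀ x : ℝ, (∑ k ∈ Finset.range (d + 1), (-1 : ℝ) ^ k *
      ((Sc (d+1) (d+1-k) : ℝ) / ((d + 1 - k : ℕ) : ℝ)) * (1 - x ^ (d + 1 - k)))
      = (-1 : ℝ) ^ d * ∑ j ∈ range (d + 1), (-1 : ℝ) ^ j * eC d j * (1 - x ^ (j + 1)) := by
    intro x
    have hterm : ∀ k ∈ range (d + 1), (-1 : ℝ) ^ k *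
        ((Sc (d+1) (d+1-k) : ℝ) / ((d + 1 - k : ℕ) : ℝ)) * (1 - x ^ (d + 1 - k))
        = (-1 : ℝ) ^ d * ((-1 : ℝ) ^ (d - k) * eC d (d - k) * (1 - x ^ ((d - k) + 1))) := by
      intro k hk
      rw [mem_range] at hk
      have hkd : k ≤ d := by omega
      have h1 : d + 1 - k = (d - k) + 1 := by omega
      rw [h1, Sc_succ d (d - k)]
      have hc : ((d - k + 1 : ℕ) : ℝ) = ((d - k : ℕ) : ℝ) + 1 := by push_cast; ring
      have hne : ((d - k : ℕ) : ℝ) + 1 ≠ 0 := by positivity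
      rw [hc, mul_comm ((((d - k : ℕ)) : ℝ) + 1) (eC d (d - k)), mul_div_assoc,
        div_self hne, mul_one]
      have hsign : (-1 : ℝ) ^ d * (-1 : ℝ) ^ (d - k) = (-1 : ℝ) ^ k := by
        rw [← pow_add]
        have : d + (d - k) = k + 2 * (d - k) := by omega
        rw [this, pow_add, pow_mul]
        simp
      rw [← hsign]
      ring
    rw [Finset.sum_congr rfl hterm, ← Finset.mul_sum]
    congr 1
    rw [← Finset.sum_range_reflect
      (fun j => (-1 : ℝ) ^ j * eC d j * (1 - x ^ (j + 1))) (d + 1)]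
    apply Finset.sum_congr rfl
    intro k hk
    rw [mem_range] at hk
    have : d + 1 - 1 - k = d - k := by omega
    rw [this]
  rw [hcurve (1 - p), hcurve (1 - (1 - p))]
  have hp' : 1 - (1 - p) = p := by ring
  rw [hp', W_eq hd0 (1 - p), W_eq hd0 p]
  -- now pure algebra with EP/AP identities
  obtain ⟨e, rfl⟩ : ∃ e, d = e + 1 := ⟨d - 1, by omega⟩
  have hs : (-1 : ℝ) ^ e * (-1 : ℝ) ^ e = 1 := by
    rw [← pow_add, show e + e = 2 * e by ring, pow_mul]
    norm_num
  have hA : AP (e+1) (-(1 - p)) = (-1 : ℝ) ^ (e+1) * EP (e+1) (-p) := by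
    have h2 := E_refl (Nat.succ_ne_zero e) (-(1 - p))
    have h3 : -1 - -(1 - p) = -p := by ring
    rw [h3] at h2
    rw [h2, ← mul_assoc, ← pow_add, show (e+1) + (e+1) = 2 * (e+1) by ring, pow_mul]
    norm_num
  have h1 := E_shift (Nat.succ_ne_zero e) (-(1 - p))
  -- h1 : (-(1-p)) * EP (e+1) (-(1-p)) = (1 + -(1-p)) * AP (e+1) (-(1-p))
  rw [hA] at h1
  have hgoal : (-1 : ℝ) ^ (e + 1 - 1) = (-1 : ℝ) ^ e := by norm_num
  rw [hgoal]
  have hps : (-1 : ℝ) ^ (e + 1) = -((-1 : ℝ) ^ e) := by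
    rw [pow_succ]; ring
  rw [hps] at h1 ⊢
  simp only [Nat.succ_eq_add_one] at h1
  linear_combination (-(-1 : ℝ) ^ e) * h1

end PermutahedralAux

/-- The number of `k`-faces per `d`-cell in the permutahedral tessellation:
`c_k(d) = (number of surjections from Fin(d+1) onto Fin(d+1-k)) / (d+1-k)`. -/
noncomputable def permFaceCount (d k : ℕ) : ℝ :=
  (Nat.card {f : Fin (d + 1) → Fin (d + 1 - k) // Function.Surjective f} : ℝ) /
    ((d + 1 - k : ℕ) : ℝ)

/-- The expected Euler characteristic curve per cell of the random permutahedral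
complex: `g_d(p) = Σ_{k=0}^d (-1)^k c_k(d) (1 - (1-p)^(d+1-k))`. -/
noncomputable def permECCurve (d : ℕ) (p : ℝ) : ℝ :=
  ∑ k ∈ Finset.range (d + 1),
    (-1 : ℝ) ^ k * permFaceCount d k * (1 - (1 - p) ^ (d + 1 - k))

/-- The expected Euler characteristic curve per cell of the random permutahedral
complex satisfies the symmetry `g_d(p) = (-1)^(d-1) g_d(1-p)`. -/
theorem permutahedral_ec_curve_symmetry (d : ℕ) (hd : 1 ≤ d) (p : ℝ) :
    permECCurve d p = (-1 : ℝ) ^ (d - 1) * permECCurve d (1 - p) := by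
  have h := permutahedral_ec_curve_symmetry' d hd p
  have hpf : ∀ k, permFaceCount d k = (Sc (d+1) (d+1-k) : ℝ) / ((d + 1 - k : ℕ) : ℝ) :=
    fun k => rfl
  simp only [permECCurve, hpf]
  exact h
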